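/- Let X_1,…,X_k be i.i.d. with the anomalous distribution having density c₃ exp(−α₂ x) on [a_{2n}, a_{2n+1}) and c₃ exp(−α₁ x) on [a_{2n−1}, a_{2n}), 0 < α₁ < α₂, a₀ = 0, a_{n+1} = 2^{a_n}. Then for any c > 0 and any ξ > ε > 0, there exists n₀ = n₀(k, c) such that for all n ≥ n₀, P(∑_{i=1}^k X_i > (ξ−ε) a_{2n}²) ≤ exp(−(1−c) α₂ (ξ−ε) a_{2n}²). -/

import Mathlib

open MeasureTheory

/-- The sequence a₀ = 0, a_{n+1} = 2^{a_n}. -/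
noncomputable def aseq : ℕ → ℝ
  | 0 => 0
  | n + 1 => (2 : ℝ) ^ (aseq n)

open Filter Real
open scoped ENNReal

lemma aseq_nonneg (n : ℕ) : 0 ≤ aseq n := by
  cases n with
  | zero => simp [aseq]
  | succ m => exact le_of_lt (Real.rpow_pos_of_pos (by norm_num) _)

lemma one_le_aseq (n : ℕ) (h : 1 ≤ n) : 1 ≤ aseq n := by
  cases n with
  | zero => omega
  | succ m =>
    have : ((2:ℝ)) ^ (0:ℝ) ≤ (2:ℝ) ^ (aseq m) :=
      Real.rpow_le_rpow_of_exponent_le (by norm_num) (aseq_nonneg m)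
    simpa [aseq] using this

lemma add_one_le_two_rpow {x : ℝ} (hx : 1 ≤ x) : x + 1 ≤ (2:ℝ) ^ x := by
  have h2 : (2:ℝ) ^ x = 2 * (2:ℝ) ^ (x - 1) := by
    rw [← Real.rpow_one_add' (by norm_num) (by intro h; nlinarith)]
    ring_nf
  have h3 : (2:ℝ) ^ (x - 1) = Real.exp ((x - 1) * Real.log 2) := by
    rw [Real.rpow_def_of_pos (by norm_num), mul_comm]
  have h4 : (x - 1) * Real.log 2 + 1 ≤ (2:ℝ) ^ (x - 1) := by
    rw [h3]; exact Real.add_one_le_exp _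
  have hl : (0.6931471803 : ℝ) < Real.log 2 := Real.log_two_gt_d9
  nlinarith [h4, hl]

lemma le_aseq (n : ℕ) (h : 1 ≤ n) : (n : ℝ) ≤ aseq n := by
  induction n with
  | zero => omega
  | succ m ih =>
    rcases Nat.eq_or_lt_of_le h with h' | h'
    · have : m = 0 := by omega
      subst this
      norm_num [aseq]
    · have hm : 1 ≤ m := by omega
      have h1 := ih hm
      have h2 := one_le_aseq m hm
      have : aseq m + 1 ≤ (2:ℝ) ^ (aseq m) := add_one_le_two_rpow h2
      have h5 : aseq (m+1) = (2:ℝ) ^ (aseq m) := by simp [aseq]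
      have : (m:ℝ) + 1 ≤ aseq (m+1) := by rw [h5]; linarith
      push_cast
      linarith

lemma tendsto_aseq_two_mul : Tendsto (fun n : ℕ => aseq (2 * n)) atTop atTop := by
  apply tendsto_atTop_mono' _ _ tendsto_natCast_atTop_atTop
  filter_upwards [eventually_ge_atTop 1] with n hn
  calc (n:ℝ) ≤ ((2*n : ℕ) : ℝ) := by push_cast; linarith [Nat.cast_nonneg (α := ℝ) n]
    _ ≤ aseq (2*n) := le_aseq _ (by omega)

lemma tendsto_quad_sub_lin {D E : ℝ} (hD : 0 < D) :
    Tendsto (fun y : ℝ => D * y^2 - E * y) atTop atTop := by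
  have h1 : Tendsto (fun y : ℝ => (D * y - E) * y) atTop atTop := by
    apply Tendsto.atTop_mul_atTop₀ _ tendsto_id
    exact tendsto_atTop_add_const_right _ _ ((tendsto_id.const_mul_atTop hD))
  refine h1.congr' ?_
  filter_upwards with y; ring

lemma tendsto_exp_two_rpow_sub_quad (b D : ℝ) (hb : 0 < b) :
    Tendsto (fun y : ℝ => b * (2:ℝ) ^ y - D * y ^ 2) atTop atTop := by
  have h0 : Tendsto (fun y : ℝ => Real.exp y / y ^ 2) atTop atTop :=
    Real.tendsto_exp_div_pow_atTop 2
  have hlog : (0:ℝ) < Real.log 2 := Real.log_pos (by norm_num)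
  have h1 : Tendsto (fun y : ℝ => Real.exp (y * Real.log 2) / (y * Real.log 2) ^ 2) atTop atTop :=
    h0.comp (tendsto_id.atTop_mul_const hlog)
  have h2 : Tendsto (fun y : ℝ => b * Real.log 2 ^ 2 * (Real.exp (y * Real.log 2) / (y * Real.log 2) ^ 2)) atTop atTop :=
    h1.const_mul_atTop (by positivity)
  have h3 : Tendsto (fun y : ℝ => b * (2:ℝ) ^ y / y ^ 2 - D) atTop atTop := by
    apply tendsto_atTop_add_const_right
    refine h2.congr' ?_
    filter_upwards [eventually_gt_atTop (0:ℝ)] with y hy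
    rw [Real.rpow_def_of_pos (by norm_num : (0:ℝ) < 2), mul_comm (Real.log 2)]
    field_simp
  have h4 : Tendsto (fun y : ℝ => (b * (2:ℝ) ^ y / y ^ 2 - D) * y ^ 2) atTop atTop :=
    h3.atTop_mul_atTop₀ (tendsto_pow_atTop (by norm_num) |>.comp tendsto_id)
  refine h4.congr' ?_
  filter_upwards [eventually_gt_atTop (0:ℝ)] with y hy
  field_simp

-- The unnormalized density of the anomalous distribution: `exp (-α₂ x)` on the
-- intervals `[a_{2n}, a_{2n+1})`, `exp (-α₁ x)` on the intervals `[a_{2n-1}, a_{2n})`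
-- (these two families of intervals cover `[0, ∞)`), and zero on the negative reals.
open Classical in
noncomputable def anomDensity (α₁ α₂ : ℝ) (x : ℝ) : ℝ :=
  if x < 0 then 0
  else if ∃ n : ℕ, aseq (2 * n) ≤ x ∧ x < aseq (2 * n + 1) then Real.exp (-α₂ * x)
  else Real.exp (-α₁ * x)

lemma anomDensity_nonneg (α₁ α₂ x : ℝ) : 0 ≤ anomDensity α₁ α₂ x := by
  unfold anomDensity
  split_ifs <;> positivity

lemma anomDensity_of_neg {α₁ α₂ x : ℝ} (hx : x < 0) : anomDensity α₁ α₂ x = 0 := by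
  unfold anomDensity; rw [if_pos hx]

lemma anomDensity_le_exp {α₁ α₂ x : ℝ} (h : α₁ ≤ α₂) (hx : 0 ≤ x) :
    anomDensity α₁ α₂ x ≤ Real.exp (-α₁ * x) := by
  unfold anomDensity
  split_ifs with h1 h2
  · positivity
  · exact Real.exp_le_exp.mpr (by nlinarith)
  · exact le_rfl

lemma anomDensity_eq_even {α₁ α₂ x : ℝ} {n : ℕ} (h1 : aseq (2*n) ≤ x) (h2 : x < aseq (2*n+1)) :
    anomDensity α₁ α₂ x = Real.exp (-α₂ * x) := by
  unfold anomDensity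
  rw [if_neg (by push_neg; exact le_trans (aseq_nonneg _) h1), if_pos ⟨n, h1, h2⟩]

lemma measurable_anomDensity (α₁ α₂ : ℝ) : Measurable (anomDensity α₁ α₂) := by
  unfold anomDensity
  apply Measurable.ite (measurableSet_lt measurable_id measurable_const) measurable_const
  apply Measurable.ite _ (by fun_prop) (by fun_prop)
  have : {x : ℝ | ∃ n : ℕ, aseq (2 * n) ≤ x ∧ x < aseq (2 * n + 1)} =
      ⋃ n : ℕ, Set.Ico (aseq (2*n)) (aseq (2*n+1)) := by
    ext x; simp [Set.mem_Ico]
  rw [this]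
  exact MeasurableSet.iUnion fun n => measurableSet_Ico

lemma integral_exp_neg_mul_Ioi {b : ℝ} (hb : 0 < b) (u : ℝ) :
    ∫ x in Set.Ioi u, Real.exp (-b * x) = Real.exp (-b * u) / b := by
  have hderiv : ∀ x ∈ Set.Ici u, HasDerivAt (fun y => -Real.exp (-b * y) / b)
      (Real.exp (-b * x)) x := by
    intro x _
    have h1 : HasDerivAt (fun y : ℝ => -b * y) (-b) x := by
      simpa using (hasDerivAt_id x).const_mul (-b)
    have h2 := (Real.hasDerivAt_exp (-b * x)).comp x h1
    have h3 := h2.neg.div_const b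
    refine h3.congr_deriv ?_
    rw [mul_neg, neg_neg, mul_div_assoc, div_self hb.ne', mul_one]
  have hint : IntegrableOn (fun x => Real.exp (-b * x)) (Set.Ioi u) :=
    exp_neg_integrableOn_Ioi u hb
  have htend : Filter.Tendsto (fun y => -Real.exp (-b * y) / b) Filter.atTop (nhds 0) := by
    have h1 : Filter.Tendsto (fun y : ℝ => -b * y) Filter.atTop Filter.atBot := by
      apply Filter.tendsto_atBot_mono (fun y => le_refl (-b * y))
      exact Filter.tendsto_id.const_mul_atTop_of_neg (by linarith)
    have h2 : Filter.Tendsto (fun y : ℝ => Real.exp (-b * y)) Filter.atTop (nhds 0) :=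
      Real.tendsto_exp_atBot.comp h1
    have h3 := (h2.neg).div_const b
    simpa using h3
  have := MeasureTheory.integral_Ioi_of_hasDerivAt_of_tendsto' hderiv hint htend
  rw [this]
  field_simp
  ring

lemma lintegral_exp_neg_Ici {b : ℝ} (hb : 0 < b) (u C : ℝ) (hC : 0 ≤ C) :
    ∫⁻ x in Set.Ici u, ENNReal.ofReal (C * Real.exp (-b * x)) =
      ENNReal.ofReal (C * (Real.exp (-b * u) / b)) := by
  have hint : IntegrableOn (fun x => C * Real.exp (-b * x)) (Set.Ici u) := by
    rw [integrableOn_Ici_iff_integrableOn_Ioi]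
    exact (exp_neg_integrableOn_Ioi u hb).const_mul C
  rw [← ofReal_integral_eq_lintegral_ofReal hint
    (Filter.Eventually.of_forall fun x => by positivity)]
  congr 1
  rw [integral_Ici_eq_integral_Ioi, MeasureTheory.integral_const_mul,
    integral_exp_neg_mul_Ioi hb]

open ProbabilityTheory in
lemma lintegral_prod_of_indep {Ω : Type*} [MeasurableSpace Ω] {μ : Measure Ω}
    [IsProbabilityMeasure μ] {k : ℕ} {Y : Fin k → Ω → ENNReal}
    (hY : ∀ i, Measurable (Y i))
    (hind : iIndepFun Y μ) :
    ∫⁻ ω, ∏ i, Y i ω ∂μ = ∏ i, ∫⁻ ω, Y i ω ∂μ := by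
  have key : ∀ s : Finset (Fin k),
      ∫⁻ ω, ∏ i ∈ s, Y i ω ∂μ = ∏ i ∈ s, ∫⁻ ω, Y i ω ∂μ := by
    intro s
    induction s using Finset.induction_on with
    | empty => simp
    | @insert j s hi ih =>
      have hm : Measurable (fun ω => ∏ l ∈ s, Y l ω) := Finset.measurable_prod _ fun l _ => hY l
      have hm' : Measurable (∏ l ∈ s, Y l) := by
        have h : (∏ l ∈ s, Y l) = fun ω => ∏ l ∈ s, Y l ω := by
          funext ω; simp [Finset.prod_apply]
        rw [h]; exact hm
      have hindep2 : IndepFun (∏ l ∈ s, Y l) (Y j) μ :=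
        hind.indepFun_finset_prod_of_notMem hY hi
      have heq := lintegral_mul_eq_lintegral_mul_lintegral_of_indepFun (hY j) hm' hindep2.symm
      have heq2 : ∫⁻ ω, Y j ω * ∏ l ∈ s, Y l ω ∂μ =
          (∫⁻ ω, Y j ω ∂μ) * ∫⁻ ω, ∏ l ∈ s, Y l ω ∂μ := by
        simpa [Pi.mul_apply, Finset.prod_apply] using heq
      simp only [Finset.prod_insert hi]
      rw [heq2, ih]
  simpa using key Finset.univ

set_option maxHeartbeats 2000000 in
open ProbabilityTheory in
theorem anom_sum_subseq_ldp {Ω : Type*} [MeasurableSpace Ω]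
    (μ : Measure Ω) [IsProbabilityMeasure μ]
    (α₁ α₂ c₃ : ℝ) (h₁ : 0 < α₁) (h₁₂ : α₁ < α₂) (hc₃ : 0 < c₃)
    (hnorm : ∫ x in Set.Ici (0 : ℝ), c₃ * anomDensity α₁ α₂ x = 1)
    (k : ℕ) (hk : 0 < k) (X : Fin k → Ω → ℝ) (hmeas : ∀ i, Measurable (X i))
    (hindep : iIndepFun X μ)
    (hmap : ∀ i, Measure.map (X i) μ =
      volume.withDensity (fun x => ENNReal.ofReal (c₃ * anomDensity α₁ α₂ x)))
    (c ξ ε : ℝ) (hc : 0 < c) (hε : 0 < ε) (hεξ : ε < ξ) :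
    ∃ n₀ : ℕ, ∀ n : ℕ, n₀ ≤ n →
      (μ {ω | (ξ - ε) * aseq (2 * n) ^ 2 < ∑ i, X i ω}).toReal ≤
        Real.exp (-(1 - c) * α₂ * ((ξ - ε) * aseq (2 * n) ^ 2)) := by
  have hα₂ : 0 < α₂ := h₁.trans h₁₂
  set d : ℝ := min c 1 / 2 with hd
  have hd0 : 0 < d := by have := lt_min hc one_pos; positivity
  have hdhalf : d ≤ 1/2 := by have := min_le_right c 1; simp only [hd]; linarith
  set t : ℝ := α₂ * (1 - d) with ht
  have ht0 : 0 < t := mul_pos hα₂ (by linarith)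
  have htlt : t < α₂ := by nlinarith
  set δ₀ : ℝ := α₂ * d with hδ₀def
  have hδ₀ : 0 < δ₀ := mul_pos hα₂ hd0
  have hgap : δ₀ ≤ t - (1 - c) * α₂ := by
    have h2d : (2:ℝ) * d ≤ c := by
      have := min_le_left c 1; simp only [hd]; linarith
    simp only [hδ₀def, ht]; nlinarith
  have hξε : 0 < ξ - ε := by linarith
  set C : ℝ := c₃ + c₃ / (α₂ - t) with hC
  have hCpos : 0 < C := by
    have : 0 < c₃ / (α₂ - t) := div_pos hc₃ (by linarith)
    simp only [hC]; linarith
  set A : ℝ := (k : ℝ) * (c₃ / α₁) with hA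
  have hApos : 0 < A := by
    have : (0:ℝ) < k := by exact_mod_cast hk
    have : 0 < c₃ / α₁ := div_pos hc₃ h₁
    simp only [hA]; positivity
  -- eventual statements
  have ev0 : ∀ᶠ n : ℕ in Filter.atTop, 1 ≤ aseq (2 * n) :=
    tendsto_aseq_two_mul.eventually_ge_atTop 1
  have ev1 : ∀ᶠ n : ℕ in Filter.atTop,
      Real.log (2 * A) + ((1 - c) * α₂ * (ξ - ε)) * aseq (2 * n) ^ 2
        ≤ α₁ * (2:ℝ) ^ (aseq (2 * n)) := by
    have hT := tendsto_exp_two_rpow_sub_quad α₁ ((1 - c) * α₂ * (ξ - ε)) h₁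
    filter_upwards [(hT.comp tendsto_aseq_two_mul).eventually_ge_atTop (Real.log (2 * A))]
      with n hn
    simp only [Function.comp_apply] at hn
    linarith
  have ev2 : ∀ᶠ n : ℕ in Filter.atTop,
      (k : ℝ) * Real.log C + Real.log 2 + ((k : ℝ) + (k : ℝ) * t) * aseq (2 * n)
        ≤ (δ₀ * (ξ - ε)) * aseq (2 * n) ^ 2 := by
    have hT := tendsto_quad_sub_lin (D := δ₀ * (ξ - ε)) (E := (k : ℝ) + (k : ℝ) * t)
      (by positivity)
    filter_upwards [(hT.comp tendsto_aseq_two_mul).eventually_ge_atTop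
      ((k : ℝ) * Real.log C + Real.log 2)] with n hn
    simp only [Function.comp_apply] at hn
    linarith
  obtain ⟨n₀, hn₀⟩ := Filter.eventually_atTop.mp ((ev0.and ev1).and ev2)
  refine ⟨n₀, fun n hn => ?_⟩
  obtain ⟨⟨ha1, hQ1⟩, hQ2⟩ := hn₀ n hn
  -- notation
  set a : ℝ := aseq (2 * n) with ha
  set T : ℝ := aseq (2 * n + 1) with hT
  have hTa : T = (2:ℝ) ^ a := by simp [hT, ha, aseq]
  set s : ℝ := (ξ - ε) * a ^ 2 with hs
  have ha0 : 0 ≤ a := aseq_nonneg _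
  have hs0 : 0 ≤ s := by positivity
  have hT0 : 0 < T := by rw [hTa]; positivity
  set f : ℝ → ℝ := anomDensity α₁ α₂ with hf
  have hfmeas : Measurable fun x => ENNReal.ofReal (c₃ * f x) :=
    ENNReal.measurable_ofReal.comp ((measurable_anomDensity α₁ α₂).const_mul c₃)
  set ν : Measure ℝ := volume.withDensity (fun x => ENNReal.ofReal (c₃ * f x)) with hν
  set H : ℝ → ENNReal := fun x => if x < T then ENNReal.ofReal (Real.exp (t * x)) else 0
    with hH
  have hHmeas : Measurable H := by
    apply Measurable.ite (measurableSet_lt measurable_id measurable_const) _ measurable_const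
    exact ENNReal.measurable_ofReal.comp (Real.measurable_exp.comp (measurable_const_mul t))
  -- event decomposition
  set E2 : Set Ω := {ω | s < ∑ i, X i ω} ∩ ⋂ i, {ω | X i ω < T} with hE2
  have hsub : {ω | s < ∑ i, X i ω} ⊆ (⋃ i, {ω | T ≤ X i ω}) ∪ E2 := by
    intro ω hω
    by_cases hall : ∀ i, X i ω < T
    · exact Or.inr ⟨hω, Set.mem_iInter.mpr hall⟩
    · push_neg at hall
      obtain ⟨i, hi⟩ := hall
      exact Or.inl (Set.mem_iUnion.mpr ⟨i, hi⟩)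
  have hmain : μ {ω | s < ∑ i, X i ω} ≤ (∑ i, μ {ω | T ≤ X i ω}) + μ E2 := by
    calc μ {ω | s < ∑ i, X i ω} ≤ μ ((⋃ i, {ω | T ≤ X i ω}) ∪ E2) := measure_mono hsub
      _ ≤ μ (⋃ i, {ω | T ≤ X i ω}) + μ E2 := measure_union_le _ _
      _ ≤ (∑ i, μ {ω | T ≤ X i ω}) + μ E2 := by
          gcongr
          exact measure_iUnion_fintype_le _ _
  -- tail bound
  have htail : ∀ i, μ {ω | T ≤ X i ω} ≤ ENNReal.ofReal (c₃ * (Real.exp (-α₁ * T) / α₁)) := by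
    intro i
    have hpre : {ω | T ≤ X i ω} = X i ⁻¹' Set.Ici T := rfl
    rw [hpre, ← Measure.map_apply (hmeas i) measurableSet_Ici, hmap i]
    rw [withDensity_apply _ measurableSet_Ici]
    calc ∫⁻ x in Set.Ici T, ENNReal.ofReal (c₃ * f x)
        ≤ ∫⁻ x in Set.Ici T, ENNReal.ofReal (c₃ * Real.exp (-α₁ * x)) := by
          apply setLIntegral_mono' measurableSet_Ici
          intro x hx
          have hx0 : 0 ≤ x := le_trans hT0.le hx
          exact ENNReal.ofReal_le_ofReal
            (mul_le_mul_of_nonneg_left (anomDensity_le_exp h₁₂.le hx0) hc₃.le)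
      _ = ENNReal.ofReal (c₃ * (Real.exp (-α₁ * T) / α₁)) :=
          lintegral_exp_neg_Ici h₁ T c₃ hc₃.le
  -- MGF bound
  have hM : ∀ i, ∫⁻ ω, H (X i ω) ∂μ ≤ ENNReal.ofReal (C * a * Real.exp (t * a)) := by
    intro i
    rw [← lintegral_map hHmeas (hmeas i), hmap i,
      lintegral_withDensity_eq_lintegral_mul volume hfmeas hHmeas]
    set G : ℝ → ENNReal := fun x =>
      Set.indicator (Set.Ico 0 a) (fun _ => ENNReal.ofReal (c₃ * Real.exp (t * a))) x +
      Set.indicator (Set.Ici a) (fun y => ENNReal.ofReal (c₃ * Real.exp ((t - α₂) * y))) x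
      with hG
    have hpt : ∀ x, ((fun x => ENNReal.ofReal (c₃ * f x)) * H) x ≤ G x := by
      intro x
      simp only [Pi.mul_apply]
      by_cases hx0 : x < 0
      · have : f x = 0 := anomDensity_of_neg hx0
        rw [this, mul_zero, ENNReal.ofReal_zero, zero_mul]
        exact zero_le
      push_neg at hx0
      by_cases hxa : x < a
      · have hfle : f x ≤ 1 := le_trans (anomDensity_le_exp h₁₂.le hx0)
          (Real.exp_le_one_iff.mpr (by nlinarith))
        have hHle : H x ≤ ENNReal.ofReal (Real.exp (t * a)) := by
          simp only [hH]
          split_ifs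
          · exact ENNReal.ofReal_le_ofReal (Real.exp_le_exp.mpr (by nlinarith))
          · exact zero_le
        have h1 : ENNReal.ofReal (c₃ * f x) * H x ≤ ENNReal.ofReal (c₃ * Real.exp (t * a)) := by
          calc ENNReal.ofReal (c₃ * f x) * H x
              ≤ ENNReal.ofReal c₃ * ENNReal.ofReal (Real.exp (t * a)) :=
                mul_le_mul' (ENNReal.ofReal_le_ofReal (by nlinarith)) hHle
            _ = ENNReal.ofReal (c₃ * Real.exp (t * a)) := (ENNReal.ofReal_mul hc₃.le).symm
        refine le_trans h1 ?_
        simp only [hG]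
        rw [Set.indicator_of_mem (Set.mem_Ico.mpr ⟨hx0, hxa⟩)]
        exact le_self_add
      · push_neg at hxa
        by_cases hxT : x < T
        · have hfx : f x = Real.exp (-α₂ * x) := anomDensity_eq_even (n := n) hxa hxT
          have hHx : H x = ENNReal.ofReal (Real.exp (t * x)) := if_pos hxT
          rw [hfx, hHx, ← ENNReal.ofReal_mul (by positivity)]
          have hcomb : c₃ * Real.exp (-α₂ * x) * Real.exp (t * x)
              = c₃ * Real.exp ((t - α₂) * x) := by
            rw [mul_assoc, ← Real.exp_add]
            ring_nf
          rw [hcomb]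
          simp only [hG]
          rw [Set.indicator_of_mem (Set.mem_Ici.mpr hxa)]
          exact le_add_self
        · have hHx : H x = 0 := if_neg hxT
          rw [hHx, mul_zero]
          exact zero_le
    have hind1meas : Measurable (fun x => Set.indicator (Set.Ico (0:ℝ) a)
        (fun _ => ENNReal.ofReal (c₃ * Real.exp (t * a))) x) :=
      measurable_const.indicator measurableSet_Ico
    calc ∫⁻ x, ((fun x => ENNReal.ofReal (c₃ * f x)) * H) x
        ≤ ∫⁻ x, G x := lintegral_mono hpt
      _ = (∫⁻ x, Set.indicator (Set.Ico (0:ℝ) a)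
              (fun _ => ENNReal.ofReal (c₃ * Real.exp (t * a))) x)
          + ∫⁻ x, Set.indicator (Set.Ici a)
              (fun y => ENNReal.ofReal (c₃ * Real.exp ((t - α₂) * y))) x :=
          lintegral_add_left hind1meas _
      _ ≤ ENNReal.ofReal (C * a * Real.exp (t * a)) := by
          rw [lintegral_indicator measurableSet_Ico, setLIntegral_const,
            lintegral_indicator measurableSet_Ici]
          have hrw : ∀ x : ℝ, (t - α₂) * x = -(α₂ - t) * x := fun x => by ring
          simp only [hrw]
          rw [lintegral_exp_neg_Ici (by linarith) a c₃ hc₃.le]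
          rw [Real.volume_Ico, sub_zero, ← ENNReal.ofReal_mul (by positivity),
            ← ENNReal.ofReal_add (by positivity)
              (by have hq : (0:ℝ) < α₂ - t := by linarith
                  positivity)]
          apply ENNReal.ofReal_le_ofReal
          have e1 : 1 ≤ Real.exp (t * a) := by nlinarith [Real.add_one_le_exp (t * a)]
          have e2 : Real.exp (-(α₂ - t) * a) ≤ 1 := Real.exp_le_one_iff.mpr (by nlinarith)
          have hq : 0 < α₂ - t := by linarith
          have h2 : c₃ * (Real.exp (-(α₂ - t) * a) / (α₂ - t)) ≤ c₃ / (α₂ - t) := by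
            rw [div_eq_mul_inv, div_eq_mul_inv, mul_comm (Real.exp (-(α₂ - t) * a)), ← mul_assoc]
            have hinv : (0:ℝ) ≤ (α₂ - t)⁻¹ := (inv_pos.mpr hq).le
            nlinarith [mul_nonneg (mul_nonneg hc₃.le hinv)
              (by linarith : (0:ℝ) ≤ 1 - Real.exp (-(α₂ - t) * a))]
          have h3 : c₃ / (α₂ - t) ≤ c₃ / (α₂ - t) * (a * Real.exp (t * a)) := by
            have : (1:ℝ) ≤ a * Real.exp (t * a) := by nlinarith
            nlinarith [div_pos hc₃ hq]
          have hCa : C * a * Real.exp (t * a)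
              = c₃ * a * Real.exp (t * a) + c₃ / (α₂ - t) * (a * Real.exp (t * a)) := by
            simp only [hC]; ring
          nlinarith
  -- product over independent variables
  have hMprod : ∫⁻ ω, ∏ i, H (X i ω) ∂μ
      ≤ ENNReal.ofReal ((C * a * Real.exp (t * a)) ^ k) := by
    have hYind : iIndepFun (fun i ω => H (X i ω)) μ :=
      hindep.comp (fun _ => H) (fun _ => hHmeas)
    rw [lintegral_prod_of_indep (Y := fun i ω => H (X i ω)) (fun i => hHmeas.comp (hmeas i)) hYind]
    calc ∏ i, ∫⁻ ω, H (X i ω) ∂μ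
        ≤ ∏ _i : Fin k, ENNReal.ofReal (C * a * Real.exp (t * a)) :=
          Finset.prod_le_prod' fun i _ => hM i
      _ = ENNReal.ofReal (C * a * Real.exp (t * a)) ^ k := by
          rw [Finset.prod_const, Finset.card_univ, Fintype.card_fin]
      _ = ENNReal.ofReal ((C * a * Real.exp (t * a)) ^ k) :=
          (ENNReal.ofReal_pow (by positivity) k).symm
  -- Markov
  have hE2meas : MeasurableSet E2 := by
    apply MeasurableSet.inter
    · exact measurableSet_lt measurable_const (Finset.measurable_sum _ fun i _ => hmeas i)
    · exact MeasurableSet.iInter fun i => measurableSet_lt (hmeas i) measurable_const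
  have hlow : ∀ ω ∈ E2, ENNReal.ofReal (Real.exp (t * s)) ≤ ∏ i, H (X i ω) := by
    intro ω hω
    obtain ⟨hsumω, hall⟩ := hω
    have hall' : ∀ i, X i ω < T := fun i => Set.mem_iInter.mp hall i
    have hprodeq : ∏ i, H (X i ω) = ENNReal.ofReal (∏ i, Real.exp (t * X i ω)) := by
      rw [ENNReal.ofReal_prod_of_nonneg (fun i _ => Real.exp_nonneg _)]
      exact Finset.prod_congr rfl fun i _ => if_pos (hall' i)
    rw [hprodeq, ← Real.exp_sum]
    apply ENNReal.ofReal_le_ofReal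
    apply Real.exp_le_exp.mpr
    rw [← Finset.mul_sum]
    have hslt : s ≤ ∑ i, X i ω := le_of_lt hsumω
    nlinarith
  have hmarkov : μ E2 ≤ ENNReal.ofReal ((C * a * Real.exp (t * a)) ^ k / Real.exp (t * s)) := by
    have h1 : ENNReal.ofReal (Real.exp (t * s)) * μ E2 ≤ ∫⁻ ω, ∏ i, H (X i ω) ∂μ := by
      calc ENNReal.ofReal (Real.exp (t * s)) * μ E2
          = ∫⁻ _ω in E2, ENNReal.ofReal (Real.exp (t * s)) ∂μ := (setLIntegral_const _ _).symm
        _ ≤ ∫⁻ ω in E2, ∏ i, H (X i ω) ∂μ := setLIntegral_mono' hE2meas hlow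
        _ ≤ ∫⁻ ω, ∏ i, H (X i ω) ∂μ := setLIntegral_le_lintegral _ _
    have h2 : μ E2 ≤ ENNReal.ofReal ((C * a * Real.exp (t * a)) ^ k)
        / ENNReal.ofReal (Real.exp (t * s)) := by
      rw [ENNReal.le_div_iff_mul_le
        (Or.inl ((ENNReal.ofReal_pos.mpr (Real.exp_pos _)).ne'))
        (Or.inl ENNReal.ofReal_ne_top)]
      calc μ E2 * ENNReal.ofReal (Real.exp (t * s))
          = ENNReal.ofReal (Real.exp (t * s)) * μ E2 := mul_comm _ _
        _ ≤ _ := le_trans h1 hMprod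
    rwa [← ENNReal.ofReal_div_of_pos (Real.exp_pos _)] at h2
  -- combine the two bounds
  have hsum_le : μ {ω | s < ∑ i, X i ω}
      ≤ ENNReal.ofReal (A * Real.exp (-α₁ * T)
          + (C * a * Real.exp (t * a)) ^ k / Real.exp (t * s)) := by
    refine le_trans hmain ?_
    rw [ENNReal.ofReal_add (by positivity) (by positivity)]
    apply add_le_add
    · calc ∑ i, μ {ω | T ≤ X i ω}
          ≤ ∑ _i : Fin k, ENNReal.ofReal (c₃ * (Real.exp (-α₁ * T) / α₁)) :=
            Finset.sum_le_sum fun i _ => htail i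
        _ = (k : ℝ≥0∞) * ENNReal.ofReal (c₃ * (Real.exp (-α₁ * T) / α₁)) := by
            rw [Finset.sum_const, Finset.card_univ, Fintype.card_fin, nsmul_eq_mul]
        _ = ENNReal.ofReal (A * Real.exp (-α₁ * T)) := by
            rw [← ENNReal.ofReal_natCast k, ← ENNReal.ofReal_mul (Nat.cast_nonneg k)]
            congr 1
            simp only [hA]
            field_simp
    · exact hmarkov
  -- real-number estimates
  have half1 : A * Real.exp (-α₁ * T) ≤ 1 / 2 * Real.exp (-(1 - c) * α₂ * s) := by
    have hlogA : Real.log (2 * A) = Real.log 2 + Real.log A :=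
      Real.log_mul two_ne_zero hApos.ne'
    have hexp : Real.log A + (-α₁ * T) ≤ -Real.log 2 + (-(1 - c) * α₂ * s) := by
      rw [hTa]
      have hrw : ((1 - c) * α₂ * (ξ - ε)) * a ^ 2 = (1 - c) * α₂ * s := by
        simp only [hs]; ring
      linarith [hQ1]
    calc A * Real.exp (-α₁ * T) = Real.exp (Real.log A + (-α₁ * T)) := by
          rw [Real.exp_add, Real.exp_log hApos]
      _ ≤ Real.exp (-Real.log 2 + (-(1 - c) * α₂ * s)) := Real.exp_le_exp.mpr hexp
      _ = 1 / 2 * Real.exp (-(1 - c) * α₂ * s) := by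
          rw [Real.exp_add, Real.exp_neg, Real.exp_log two_pos]
          ring
  have half2 : (C * a * Real.exp (t * a)) ^ k / Real.exp (t * s)
      ≤ 1 / 2 * Real.exp (-(1 - c) * α₂ * s) := by
    have hbase : C * a * Real.exp (t * a) ≤ Real.exp (Real.log C + a + t * a) := by
      rw [Real.exp_add, Real.exp_add, Real.exp_log hCpos]
      have h1 : a ≤ Real.exp a := by nlinarith [Real.add_one_le_exp a]
      have h2 := mul_le_mul_of_nonneg_left h1 (mul_pos hCpos (Real.exp_pos (t * a))).le
      nlinarith [h2]
    have hpow : (C * a * Real.exp (t * a)) ^ k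
        ≤ Real.exp ((k : ℝ) * (Real.log C + a + t * a)) := by
      calc (C * a * Real.exp (t * a)) ^ k
          ≤ (Real.exp (Real.log C + a + t * a)) ^ k := pow_le_pow_left₀ (by positivity) hbase k
        _ = Real.exp ((k : ℝ) * (Real.log C + a + t * a)) := (Real.exp_nat_mul _ k).symm
    have hdiv : (C * a * Real.exp (t * a)) ^ k / Real.exp (t * s)
        ≤ Real.exp ((k : ℝ) * (Real.log C + a + t * a) - t * s) := by
      rw [Real.exp_sub]
      gcongr
    have hexp2 : (k : ℝ) * (Real.log C + a + t * a) - t * s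
        ≤ -(1 - c) * α₂ * s - Real.log 2 := by
      have hδs : (δ₀ * (ξ - ε)) * a ^ 2 ≤ (t - (1 - c) * α₂) * s := by
        have hmul := mul_le_mul_of_nonneg_right hgap (by positivity : (0:ℝ) ≤ (ξ - ε) * a ^ 2)
        simp only [hs]
        nlinarith
      have hexpand : (k : ℝ) * (Real.log C + a + t * a)
          = (k : ℝ) * Real.log C + ((k : ℝ) + (k : ℝ) * t) * a := by ring
      nlinarith [hQ2]
    calc (C * a * Real.exp (t * a)) ^ k / Real.exp (t * s)
        ≤ Real.exp ((k : ℝ) * (Real.log C + a + t * a) - t * s) := hdiv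
      _ ≤ Real.exp (-(1 - c) * α₂ * s - Real.log 2) := Real.exp_le_exp.mpr hexp2
      _ = 1 / 2 * Real.exp (-(1 - c) * α₂ * s) := by
          rw [Real.exp_sub, Real.exp_log two_pos]
          ring
  have hfinal : A * Real.exp (-α₁ * T)
      + (C * a * Real.exp (t * a)) ^ k / Real.exp (t * s)
      ≤ Real.exp (-(1 - c) * α₂ * s) := by linarith
  exact ENNReal.toReal_le_of_le_ofReal (Real.exp_nonneg _)
    (le_trans hsum_le (ENNReal.ofReal_le_ofReal hfinal))
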